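/- Assume f̂^≤(x) < ∞ for all x ∈ X. Fix m ∈ X and set p = r^<(f(m)). Let Z = {z ∈ ℝ | r^<(z) < r^≤(z)} (this set is countable since r^≤ is monotone) and let ζ_p = ∑_{z ∈ Z, r^≤(z) ≤ p} (r^≤(z) − r^<(z))² be the sum of squared improvement jumps within the success range. Then the expected decrease of spatial suboptimality of a sample x ~ P satisfies ∫ max{0, f̂^<(m) − f̂^<(x)} dP(x) ≥ (p² + ζ_p)/(2u), where the integrand is read as 0 whenever f̂^<(x) ≥ f̂^<(m). -/

import Mathlib

open MeasureTheory Set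

/-- `r^<(z) = P {x | f x < z}` (as a real). -/
noncomputable def rLT {X : Type*} [MeasurableSpace X] (P : Measure X) (f : X → ℝ) (z : ℝ) : ℝ :=
  (P {x | f x < z}).toReal

/-- `r^≤(z) = P {x | f x ≤ z}` (as a real). -/
noncomputable def rLE {X : Type*} [MeasurableSpace X] (P : Measure X) (f : X → ℝ) (z : ℝ) : ℝ :=
  (P {x | f x ≤ z}).toReal

/-- Sum of squared improvement jumps within the success range:
`ζ_p = ∑_{z : r^<(z) < r^≤(z), r^≤(z) ≤ p} (r^≤(z) − r^<(z))²`. -/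
noncomputable def zetaJump {X : Type*} [MeasurableSpace X] (P : Measure X) (f : X → ℝ)
    (p : ℝ) : ℝ :=
  ∑' z : {z : ℝ // rLT P f z < rLE P f z ∧ rLE P f z ≤ p},
    (rLE P f (z : ℝ) - rLT P f (z : ℝ)) ^ 2

/-- Expected decrease of the spatial suboptimality
`f̂^<(x) = Λ {x' | f x' < f x}` under a sample `x ∼ P` with density bounded by `u`:
`∫ max{0, f̂^<(m) − f̂^<(x)} dP(x) ≥ (p² + ζ_p)/(2u)` where `p = r^<(f m)`. -/
theorem expected_decrease
    {X : Type*} [MeasurableSpace X] (Λ : Measure X) [SigmaFinite Λ]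
    (P : Measure X) [IsProbabilityMeasure P]
    (f : X → ℝ) (hf : Measurable f)
    (hfin : ∀ x : X, Λ {x' | f x' ≤ f x} < ⊤)
    (u : ℝ) (hu : 0 < u)
    (hPu : ∀ A : Set X, MeasurableSet A → P A ≤ ENNReal.ofReal u * Λ A)
    (m : X) :
    ((rLT P f (f m)) ^ 2 + zetaJump P f (rLT P f (f m))) / (2 * u) ≤
      ∫ x, max 0 ((Λ {x' | f x' < f m}).toReal - (Λ {x' | f x' < f x}).toReal) ∂P := by
  classical
  set c := f m with hc
  set A : Set X := {x | f x < c} with hA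
  have hAm : MeasurableSet A := hf measurableSet_Iio
  have hΛA : Λ A ≠ ⊤ := by
    have hsub : A ⊆ {x' | f x' ≤ f m} := fun x hx => show f x ≤ f m from le_of_lt hx
    exact ((measure_mono hsub).trans_lt (hfin m)).ne
  have hf1 : Measurable fun q : X × X => f q.1 := hf.comp measurable_fst
  have hf2 : Measurable fun q : X × X => f q.2 := hf.comp measurable_snd
  set T : Set (X × X) := {q | f q.1 < c ∧ f q.1 ≤ f q.2 ∧ f q.2 < c} with hT
  have hTm : MeasurableSet T := by
    exact (hf1 measurableSet_Iio).inter ((measurableSet_le hf1 hf2).inter (hf2 measurableSet_Iio))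
  set Dset : Set (X × X) := {q | f q.1 = f q.2 ∧ f q.2 < c} with hD
  have hDm : MeasurableSet Dset := by
    exact (measurableSet_eq_fun hf1 hf2).inter (hf2 measurableSet_Iio)
  set I : ENNReal := (P.prod Λ) T with hIdef
  set K : ENNReal := (P.prod P) T with hKdef
  set D : ENNReal := (P.prod P) Dset with hDdef
  set p : ℝ := rLT P f c with hp
  -- finiteness of I
  have hIfin : I ≠ ⊤ := by
    have : I ≤ (P.prod Λ) (univ ×ˢ A) := by
      apply measure_mono
      rintro ⟨x, y⟩ ⟨_, _, h2⟩
      exact ⟨trivial, h2⟩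
    rw [Measure.prod_prod, measure_univ, one_mul] at this
    exact (this.trans_lt (lt_top_iff_ne_top.2 hΛA)).ne
  -- Step B : I.toReal ≤ ∫ max ...
  have hmeas1 : Measurable fun x => (Λ {x' | f x' < f x} : ENNReal) := by
    have h1 : Monotone fun t : ℝ => (Λ.map f) (Iio t) :=
      fun a b hab => measure_mono (Iio_subset_Iio hab)
    have h2 : ∀ x, Λ {x' | f x' < f x} = (Λ.map f) (Iio (f x)) :=
      fun x => (Measure.map_apply hf measurableSet_Iio).symm
    simp only [h2]
    exact h1.measurable.comp hf
  set h : X → ℝ := fun x => max 0 ((Λ A).toReal - (Λ {x' | f x' < f x}).toReal) with hh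
  have hhmeas : Measurable h := by
    exact measurable_const.max (measurable_const.sub hmeas1.ennreal_toReal)
  have hhnn : ∀ x, 0 ≤ h x := fun x => le_max_left _ _
  have hhbd : ∀ x, h x ≤ (Λ A).toReal := by
    intro x
    apply max_le ENNReal.toReal_nonneg
    have := ENNReal.toReal_nonneg (a := Λ {x' | f x' < f x})
    linarith
  have hpt : ∀ x, Λ (Prod.mk x ⁻¹' T) ≤ ENNReal.ofReal (h x) := by
    intro x
    by_cases hx : f x < c
    · have hpre : Prod.mk x ⁻¹' T = A \ {x' | f x' < f x} := by
        ext x'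
        simp only [hT, mem_preimage, mem_setOf_eq, mem_diff, hA, not_lt]
        constructor
        · rintro ⟨_, h1, h2⟩; exact ⟨h2, h1⟩
        · rintro ⟨h2, h1⟩; exact ⟨hx, h1, h2⟩
      have hBx : {x' | f x' < f x} ⊆ A := fun x' hx' => lt_trans hx' hx
      have hBxfin : Λ {x' | f x' < f x} ≠ ⊤ :=
        ((measure_mono hBx).trans_lt (lt_top_iff_ne_top.2 hΛA)).ne
      rw [hpre, measure_diff hBx (hf measurableSet_Iio).nullMeasurableSet hBxfin]
      have hsub : Λ {x' | f x' < f x} ≤ Λ A := measure_mono hBx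
      have h1 : (Λ A - Λ {x' | f x' < f x}).toReal
          = (Λ A).toReal - (Λ {x' | f x' < f x}).toReal :=
        ENNReal.toReal_sub_of_le hsub hΛA
      calc Λ A - Λ {x' | f x' < f x}
          = ENNReal.ofReal ((Λ A - Λ {x' | f x' < f x}).toReal) := by
            rw [ENNReal.ofReal_toReal]
            exact (tsub_le_self.trans_lt (lt_top_iff_ne_top.2 hΛA)).ne
        _ ≤ ENNReal.ofReal (h x) := by
            apply ENNReal.ofReal_le_ofReal
            rw [h1]
            exact le_max_right _ _
    · have hpre : Prod.mk x ⁻¹' T = ∅ := by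
        ext x'
        simp only [hT, mem_preimage, mem_setOf_eq, mem_empty_iff_false, iff_false]
        rintro ⟨h1, _⟩; exact hx h1
      rw [hpre, measure_empty]
      exact zero_le
  have hint : Integrable h P := by
    refine Integrable.mono' (integrable_const ((Λ A).toReal)) hhmeas.aestronglyMeasurable ?_
    exact ae_of_all _ fun x => by rw [Real.norm_eq_abs, abs_of_nonneg (hhnn x)]; exact hhbd x
  have hIineq : I.toReal ≤ ∫ x, h x ∂P := by
    rw [integral_eq_lintegral_of_nonneg_ae (ae_of_all _ hhnn) hhmeas.aestronglyMeasurable]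
    have hmono : I ≤ ∫⁻ x, ENNReal.ofReal (h x) ∂P := by
      rw [hIdef, Measure.prod_apply hTm]
      exact lintegral_mono hpt
    have hfin2 : (∫⁻ x, ENNReal.ofReal (h x) ∂P) ≠ ⊤ := by
      have : (∫⁻ x, ENNReal.ofReal (h x) ∂P) ≤ ∫⁻ _, ENNReal.ofReal ((Λ A).toReal) ∂P :=
        lintegral_mono fun x => ENNReal.ofReal_le_ofReal (hhbd x)
      rw [lintegral_const, measure_univ, mul_one] at this
      exact (this.trans_lt ENNReal.ofReal_lt_top).ne
    exact ENNReal.toReal_mono hfin2 hmono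
  -- Step C : K ≤ ofReal u * I
  have hPle : P ≤ (ENNReal.ofReal u) • Λ := by
    refine Measure.le_iff.mpr fun s hs => ?_
    rw [Measure.smul_apply, smul_eq_mul]
    exact hPu s hs
  have hKI : K ≤ ENNReal.ofReal u * I := by
    rw [hKdef, hIdef, Measure.prod_apply_symm hTm, Measure.prod_apply_symm hTm,
      ← smul_eq_mul, ← lintegral_smul_measure]
    exact lintegral_mono' hPle le_rfl
  -- Step D : K + K = P A * P A + D
  have hswapinv : (P.prod P) (Prod.swap ⁻¹' T) = K := by
    rw [hKdef, ← Measure.map_apply measurable_swap hTm, Measure.prod_swap]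
  have hunion : T ∪ Prod.swap ⁻¹' T = A ×ˢ A := by
    ext ⟨x, y⟩
    simp only [hT, mem_union, mem_preimage, Prod.swap_prod_mk, mem_setOf_eq, mem_prod, hA]
    constructor
    · rintro (⟨h1, _, h3⟩ | ⟨h1, _, h3⟩)
      · exact ⟨h1, h3⟩
      · exact ⟨h3, h1⟩
    · rintro ⟨h1, h2⟩
      rcases le_total (f x) (f y) with hle | hle
      · exact Or.inl ⟨h1, hle, h2⟩
      · exact Or.inr ⟨h2, hle, h1⟩
  have hinter : T ∩ Prod.swap ⁻¹' T = Dset := by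
    ext ⟨x, y⟩
    simp only [hT, hD, mem_inter_iff, mem_preimage, Prod.swap_prod_mk, mem_setOf_eq]
    constructor
    · rintro ⟨⟨h1, h2, h3⟩, _, h5, _⟩
      exact ⟨le_antisymm h2 h5, h3⟩
    · rintro ⟨h1, h2⟩
      exact ⟨⟨h1 ▸ h2, le_of_eq h1, h2⟩, h1 ▸ h2, le_of_eq h1.symm, h1 ▸ h2⟩
  have hKK : K + K = P A * P A + D := by
    have := measure_union_add_inter (μ := P.prod P) (s := T) (t := Prod.swap ⁻¹' T)
      (measurable_swap hTm)
    rw [hunion, hinter, Measure.prod_prod, hswapinv] at this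
    rw [← hDdef, ← hKdef] at this
    exact this.symm
  -- Step E : compute D as a sum over atoms
  set ν : Measure ℝ := P.map f with hν
  haveI : IsProbabilityMeasure ν := Measure.isProbabilityMeasure_map hf.aemeasurable
  have hνap : ∀ s : Set ℝ, MeasurableSet s → ν s = P (f ⁻¹' s) :=
    fun s hs => Measure.map_apply hf hs
  set q : ℝ → ENNReal := fun t => P {x | f x = t} with hq
  have hqfin : ∀ t, q t ≠ ⊤ := fun t => measure_ne_top P _
  have hqmeas : Measurable q := by
    have hs : MeasurableSet {pr : ℝ × ℝ | pr.2 = pr.1} :=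
      measurableSet_eq_fun measurable_snd measurable_fst
    have hmm := measurable_measure_prodMk_left (ν := ν) hs
    have heq : ∀ t : ℝ, ν (Prod.mk t ⁻¹' {pr : ℝ × ℝ | pr.2 = pr.1}) = q t := by
      intro t
      have h1 : Prod.mk t ⁻¹' {pr : ℝ × ℝ | pr.2 = pr.1} = {t} := by
        ext b; simp [Set.mem_singleton_iff]
      rw [h1, hνap _ (measurableSet_singleton t)]
      rfl
    simpa only [heq] using hmm
  have hDeq : D = ∫⁻ t in Iio c, q t ∂ν := by
    have hsl : ∀ x, P (Prod.mk x ⁻¹' Dset) = (Iio c).indicator q (f x) := by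
      intro x
      by_cases hx : f x < c
      · have h1 : Prod.mk x ⁻¹' Dset = {y | f y = f x} := by
          ext y
          simp only [hD, mem_preimage, mem_setOf_eq]
          constructor
          · rintro ⟨hxy, _⟩; exact hxy.symm
          · intro hxy; exact ⟨hxy.symm, by rw [hxy]; exact hx⟩
        rw [h1, indicator_of_mem (show f x ∈ Iio c from hx)]
      · have h1 : Prod.mk x ⁻¹' Dset = ∅ := by
          ext y
          simp only [hD, mem_preimage, mem_setOf_eq, mem_empty_iff_false, iff_false]
          rintro ⟨hxy, hyc⟩; exact hx (by rw [hxy]; exact hyc)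
        rw [h1, measure_empty, indicator_of_notMem (show f x ∉ Iio c from hx)]
    rw [hDdef, Measure.prod_apply hDm]
    simp only [hsl]
    rw [← lintegral_indicator measurableSet_Iio]
    rw [← lintegral_map (hqmeas.indicator measurableSet_Iio) hf, ← hν]
  have hS : {t : ℝ | 0 < q t}.Countable := Measure.countable_meas_level_set_pos hf
  set S : Set ℝ := {t : ℝ | 0 < q t} with hSdef
  have hSm : MeasurableSet S := hS.measurableSet
  set E : Set ℝ := Iio c ∩ S with hE
  have hEc : E.Countable := hS.mono inter_subset_right
  have hEm : MeasurableSet E := measurableSet_Iio.inter hSm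
  have hDsum : D = ∑' t : E, q t * q t := by
    have hind : (Iio c).indicator q = E.indicator q := by
      funext t
      simp only [Set.indicator_apply, hE, hSdef, mem_inter_iff, mem_setOf_eq, mem_Iio]
      by_cases htS : 0 < q t
      · simp [htS]
      · have hq0 : q t = 0 := nonpos_iff_eq_zero.mp (not_lt.mp htS)
        split_ifs <;> simp [hq0]
    rw [hDeq, ← lintegral_indicator measurableSet_Iio, hind, lintegral_indicator hEm,
      lintegral_countable q hEc]
    refine tsum_congr fun t => ?_
    rw [hνap _ (measurableSet_singleton _)]
    rfl
  -- Step F : D.toReal = zetaJump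
  have hq_split : ∀ z : ℝ, rLE P f z = rLT P f z + (q z).toReal := by
    intro z
    have hdis : Disjoint {x | f x < z} {x | f x = z} := by
      rw [Set.disjoint_left]
      intro x hx1 hx2
      exact absurd hx2 (ne_of_lt hx1)
    have hun : {x : X | f x ≤ z} = {x | f x < z} ∪ {x | f x = z} := by
      ext x
      simp only [mem_setOf_eq, mem_union, le_iff_lt_or_eq]
    rw [rLE, rLT, hun, measure_union hdis (hf (measurableSet_singleton z))]
    exact ENNReal.toReal_add (measure_ne_top P _) (measure_ne_top P _)
  have hiff : ∀ z : ℝ, (rLT P f z < rLE P f z ∧ rLE P f z ≤ p) ↔ z ∈ E := by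
    intro z
    have hzq : rLT P f z < rLE P f z ↔ 0 < q z := by
      rw [hq_split z]
      constructor
      · intro h1
        have h2 : 0 < (q z).toReal := by linarith
        exact (ENNReal.toReal_pos_iff.mp h2).1
      · intro h1
        have h2 : 0 < (q z).toReal := ENNReal.toReal_pos h1.ne' (hqfin z)
        linarith
    simp only [hE, mem_inter_iff, mem_Iio, hSdef, mem_setOf_eq]
    constructor
    · rintro ⟨h1, h2⟩
      refine ⟨?_, hzq.mp h1⟩
      by_contra hzc
      push_neg at hzc
      have hsub : {x : X | f x < c} ⊆ {x | f x < z} := fun x hx => lt_of_lt_of_le hx hzc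
      have h3 : p ≤ rLT P f z := by
        rw [hp, rLT, rLT]
        exact ENNReal.toReal_mono (measure_ne_top P _) (measure_mono hsub)
      linarith
    · rintro ⟨h1, h2⟩
      refine ⟨hzq.mpr h2, ?_⟩
      have hsub : {x : X | f x ≤ z} ⊆ {x | f x < c} := fun x hx => lt_of_le_of_lt hx h1
      rw [hp, rLE, rLT]
      exact ENNReal.toReal_mono (measure_ne_top P _) (measure_mono hsub)
  have hzeta : zetaJump P f p = D.toReal := by
    have htsum := Equiv.tsum_eq
      (⟨fun z => ⟨z.1, (hiff z.1).mp z.2⟩, fun z => ⟨z.1, (hiff z.1).mpr z.2⟩,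
        fun z => rfl, fun z => rfl⟩ :
        {z : ℝ // rLT P f z < rLE P f z ∧ rLE P f z ≤ p} ≃ {z : ℝ // z ∈ E})
      (fun z : {z : ℝ // z ∈ E} => (rLE P f (z : ℝ) - rLT P f (z : ℝ)) ^ 2)
    simp only [Equiv.coe_fn_mk] at htsum
    have h0 : zetaJump P f p = ∑' t : {z : ℝ // z ∈ E},
        (rLE P f (t : ℝ) - rLT P f (t : ℝ)) ^ 2 := by
      rw [zetaJump]; exact htsum
    have hterm : ∀ t : {z : ℝ // z ∈ E},
        (rLE P f (t : ℝ) - rLT P f (t : ℝ)) ^ 2 = ((q (t : ℝ)) * q (t : ℝ)).toReal := by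
      intro t
      rw [hq_split, ENNReal.toReal_mul]
      ring
    calc zetaJump P f p
        = ∑' t : {z : ℝ // z ∈ E}, (rLE P f (t : ℝ) - rLT P f (t : ℝ)) ^ 2 := h0
      _ = ∑' t : {z : ℝ // z ∈ E}, ((q (t : ℝ)) * q (t : ℝ)).toReal := tsum_congr hterm
      _ = (∑' t : {z : ℝ // z ∈ E}, (q (t : ℝ)) * q (t : ℝ)).toReal :=
          (ENNReal.tsum_toReal_eq fun t => ENNReal.mul_ne_top (hqfin _) (hqfin _)).symm
      _ = D.toReal := by rw [hDsum]
  -- Step G : assemble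
  have hDfin : D ≠ ⊤ := measure_ne_top _ _
  have hPA : (P A).toReal = p := by rw [hp, rLT, hA]
  have h2u : ENNReal.ofReal u * I + ENNReal.ofReal u * I = ENNReal.ofReal (2 * u) * I := by
    rw [ENNReal.ofReal_mul (by norm_num : (0:ℝ) ≤ 2), ENNReal.ofReal_ofNat, two_mul, add_mul]
  have hmain : P A * P A + D ≤ ENNReal.ofReal (2 * u) * I := by
    calc P A * P A + D = K + K := hKK.symm
      _ ≤ ENNReal.ofReal u * I + ENNReal.ofReal u * I := add_le_add hKI hKI
      _ = ENNReal.ofReal (2 * u) * I := h2u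
  have hRfin : ENNReal.ofReal (2 * u) * I ≠ ⊤ :=
    ENNReal.mul_ne_top ENNReal.ofReal_ne_top hIfin
  have hmainR : p ^ 2 + zetaJump P f p ≤ 2 * u * I.toReal := by
    have h1 := ENNReal.toReal_mono hRfin hmain
    rw [ENNReal.toReal_add (ENNReal.mul_ne_top (measure_ne_top P _) (measure_ne_top P _)) hDfin,
      ENNReal.toReal_mul, ENNReal.toReal_mul, hPA,
      ENNReal.toReal_ofReal (by positivity : (0:ℝ) ≤ 2 * u)] at h1
    calc p ^ 2 + zetaJump P f p = p * p + D.toReal := by rw [hzeta]; ring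
      _ ≤ 2 * u * I.toReal := h1
  rw [div_le_iff₀ (by positivity : (0:ℝ) < 2 * u)]
  calc p ^ 2 + zetaJump P f p ≤ 2 * u * I.toReal := hmainR
    _ ≤ 2 * u * ∫ x, h x ∂P := by
        exact mul_le_mul_of_nonneg_left hIineq (by positivity)
    _ = (∫ x, h x ∂P) * (2 * u) := mul_comm _ _
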